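/- Triple critical point factorization on the elliptic curve: Let x, σ be real numbers with 4·σ⁶·x⁴ = 2x − 3 and x ≠ 2. Define α' = 2σ(1 − x³σ³)/(2 − x), β' = 2σ(1 + x³σ³)/(2 − x), X = σ²(1 − 2x), and w₁ = σ(3x − 2)/(2 − x). Then for every real w: (w − α')·(w − β')·(w² − X) + (α' − β') = (w − σ)³·(w − w₁). -/

import Mathlib

/-- Triple critical point factorization on the elliptic curve: if `4σ⁶x⁴ = 2x − 3` and
`x ≠ 2`, then with `α' = 2σ(1 − x³σ³)/(2 − x)`, `β' = 2σ(1 + x³σ³)/(2 − x)`,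
`X = σ²(1 − 2x)`, `w₁ = σ(3x − 2)/(2 − x)`, one has, for every real `w`,
`(w − α')(w − β')(w² − X) + (α' − β') = (w − σ)³(w − w₁)`. -/
theorem triple_critical_point_factorization (x σ : ℝ)
    (hcurve : 4 * σ ^ 6 * x ^ 4 = 2 * x - 3) (hx : x ≠ 2) :
    ∀ w : ℝ,
      (w - 2 * σ * (1 - x ^ 3 * σ ^ 3) / (2 - x)) *
            (w - 2 * σ * (1 + x ^ 3 * σ ^ 3) / (2 - x)) * (w ^ 2 - σ ^ 2 * (1 - 2 * x)) +
          (2 * σ * (1 - x ^ 3 * σ ^ 3) / (2 - x) - 2 * σ * (1 + x ^ 3 * σ ^ 3) / (2 - x)) =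
        (w - σ) ^ 3 * (w - σ * (3 * x - 2) / (2 - x)) := by
  intro w
  have h2 : (2 : ℝ) - x ≠ 0 := by
    intro h; apply hx; linarith
  field_simp
  linear_combination (σ ^ 4 * x ^ 2 - 2 * σ ^ 4 * x ^ 3 - w ^ 2 * x ^ 2 * σ ^ 2) * hcurve
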